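/- Let g : ℝ → ℂ be Lebesgue integrable and define γ̂(ω) := ∫_{−∞}^{∞} g(u) e^{iωu} du. Then the time-domain Lindblad operator equals the frequency-domain one: ∫_{−∞}^{∞} g(−s) · e^{iHs} A e^{−iHs} ds = Σ_{ω ∈ F} γ̂(ω) A(ω), where F := {E_l − E_k : 1 ≤ k, l ≤ N} is the finite set of Bohr frequencies of H. -/

import Mathlib

open scoped Matrix Matrix.Norms.L2Operator

/-- The frequency component `A(ω) := Σ_{(k,l) : E_l − E_k = ω} P_k A P_l` of a matrix `A`,
where `P_k` is the orthogonal projection onto the `k`-th eigenvector. -/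
noncomputable def freqComp {N : ℕ} (E : Fin N → ℝ) (P : Fin N → Matrix (Fin N) (Fin N) ℂ)
    (A : Matrix (Fin N) (Fin N) ℂ) (ω : ℝ) : Matrix (Fin N) (Fin N) ℂ :=
  ∑ k : Fin N, ∑ l : Fin N, if E l - E k = ω then P k * A * P l else 0

/-- for an integrable `g : ℝ → ℂ` with Fourier transform
`γ̂(ω) = ∫ g(u) e^{iωu} du`, the time-domain Lindblad operator equals the frequency-domain one:
`∫ g(−s) e^{iHs} A e^{−iHs} ds = Σ_{ω ∈ F} γ̂(ω) A(ω)`. -/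
theorem integral_g_heisenberg_eq_sum {N : ℕ}
    (H : Matrix (Fin N) (Fin N) ℂ) (hH : H.IsHermitian)
    (v : Fin N → Fin N → ℂ) (E : Fin N → ℝ)
    (horth : ∀ k l : Fin N, dotProduct (star (v k)) (v l) = if k = l then 1 else 0)
    (heig : ∀ k : Fin N, H.mulVec (v k) = (E k : ℂ) • v k)
    (A : Matrix (Fin N) (Fin N) ℂ)
    (g : ℝ → ℂ) (hg : MeasureTheory.Integrable g) :
    ∫ s : ℝ, g (-s) •
        (NormedSpace.exp ((Complex.I * s) • H) * A * NormedSpace.exp ((-(Complex.I * s)) • H))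
      = ∑ ω ∈ Finset.image (fun p : Fin N × Fin N => E p.2 - E p.1) Finset.univ,
          (∫ u : ℝ, g u * Complex.exp (Complex.I * ω * u)) •
            freqComp E (fun k => Matrix.vecMulVec (v k) (star (v k))) A ω := by
  classical
  set P : Fin N → Matrix (Fin N) (Fin N) ℂ :=
    fun k => Matrix.vecMulVec (v k) (star (v k)) with hPdef
  set V : Matrix (Fin N) (Fin N) ℂ := Matrix.of (fun i k => v k i) with hVdef
  have hVHV : Vᴴ * V = 1 := by
    ext k l
    have := horth k l
    simpa [Matrix.mul_apply, Matrix.conjTranspose_apply, dotProduct,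
      Matrix.one_apply, hVdef] using this
  have hVVH : V * Vᴴ = 1 := mul_eq_one_comm.mp hVHV
  set U : (Matrix (Fin N) (Fin N) ℂ)ˣ := ⟨V, Vᴴ, hVVH, hVHV⟩ with hUdef
  -- spectral decomposition
  have hHV : H * V = V * Matrix.diagonal (fun k => (E k : ℂ)) := by
    ext i k
    have h1 := congrFun (heig k) i
    simp only [Matrix.mulVec, Pi.smul_apply, smul_eq_mul, dotProduct] at h1
    simp only [Matrix.mul_apply, Matrix.diagonal_apply, hVdef, Matrix.of_apply,
      mul_ite, mul_zero]
    rw [Finset.sum_ite_eq' Finset.univ k (fun x => v x i * (E x : ℂ))]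
    rw [h1]
    simp [mul_comm]
  have hHspec : H = V * Matrix.diagonal (fun k => (E k : ℂ)) * Vᴴ := by
    calc H = H * (V * Vᴴ) := by rw [hVVH, mul_one]
    _ = (H * V) * Vᴴ := by rw [mul_assoc]
    _ = V * Matrix.diagonal (fun k => (E k : ℂ)) * Vᴴ := by rw [hHV]
  -- conjugation of a diagonal matrix is a sum of the projections
  have hdiagP : ∀ c : Fin N → ℂ,
      V * Matrix.diagonal c * Vᴴ = ∑ k : Fin N, c k • P k := by
    intro c
    ext i j
    simp only [Matrix.mul_apply, Matrix.sum_apply, Matrix.smul_apply,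
      Matrix.vecMulVec_apply, Pi.star_apply, smul_eq_mul, Matrix.conjTranspose_apply,
      hVdef, Matrix.of_apply, hPdef, Matrix.diagonal_apply, mul_ite, mul_zero,
      Finset.sum_ite_eq', Finset.mem_univ, if_true]
    exact Finset.sum_congr rfl fun k _ => by ring
  -- exponential formula
  have hexp : ∀ c : ℂ, NormedSpace.exp (c • H)
      = ∑ k : Fin N, Complex.exp (c * E k) • P k := by
    intro c
    have hdsmul : c • Matrix.diagonal (fun k => (E k : ℂ))
        = Matrix.diagonal (fun k => c * (E k : ℂ)) := by
      ext i j
      by_cases h : i = j <;> simp [Matrix.diagonal_apply, h]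
    have h1 : c • H = V * Matrix.diagonal (fun k => c * (E k : ℂ)) * Vᴴ := by
      rw [hHspec, ← hdsmul, Matrix.mul_smul, Matrix.smul_mul]
    have h2 : V * Matrix.diagonal (fun k => c * (E k : ℂ)) * Vᴴ
        = (U : Matrix (Fin N) (Fin N) ℂ) * Matrix.diagonal (fun k => c * (E k : ℂ))
            * (↑U⁻¹ : Matrix (Fin N) (Fin N) ℂ) := rfl
    rw [h1, h2, Matrix.exp_units_conj, Matrix.exp_diagonal]
    have h3 : (NormedSpace.exp fun k => c * (E k : ℂ))
        = fun k => Complex.exp (c * (E k : ℂ)) := by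
      rw [Pi.exp_def]
      funext k
      exact (congrFun Complex.exp_eq_exp_ℂ _).symm
    rw [h3]
    exact hdiagP _
  -- pointwise formula for the Heisenberg evolution
  have hF : ∀ s : ℝ,
      NormedSpace.exp ((Complex.I * s) • H) * A * NormedSpace.exp ((-(Complex.I * s)) • H)
        = ∑ k : Fin N, ∑ l : Fin N,
            Complex.exp (Complex.I * s * ((E k - E l : ℝ) : ℂ)) • (P k * A * P l) := by
    intro s
    rw [hexp (Complex.I * s), hexp (-(Complex.I * s))]
    rw [Finset.sum_mul, Finset.sum_mul]
    refine Finset.sum_congr rfl fun k _ => ?_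
    rw [Finset.mul_sum]
    refine Finset.sum_congr rfl fun l _ => ?_
    rw [smul_mul_assoc, smul_mul_assoc, mul_smul_comm, smul_smul, ← Complex.exp_add]
    congr 2
    push_cast
    ring
  -- integrability of each scalar coefficient
  have hint : ∀ r : ℝ, MeasureTheory.Integrable
      (fun s : ℝ => g (-s) * Complex.exp (Complex.I * s * (r : ℂ))) := by
    intro r
    have h1 : MeasureTheory.Integrable (fun s : ℝ => g (-s)) := hg.comp_neg
    have h2 : MeasureTheory.Integrable
        (fun s : ℝ => Complex.exp (Complex.I * s * (r : ℂ)) * g (-s)) := by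
      refine h1.bdd_mul (c := 1) ?_ ?_
      · exact (Complex.continuous_exp.comp (by continuity)).aestronglyMeasurable
      · refine Filter.Eventually.of_forall fun s => ?_
        rw [Complex.norm_exp]
        have : (Complex.I * s * (r : ℂ)).re = 0 := by
          simp [Complex.mul_re, Complex.mul_im]
        rw [this, Real.exp_zero]
    simpa [mul_comm] using h2
  -- compute the integral
  have key : (∫ s : ℝ, g (-s) •
        (NormedSpace.exp ((Complex.I * s) • H) * A
          * NormedSpace.exp ((-(Complex.I * s)) • H)))
      = ∑ k : Fin N, ∑ l : Fin N,
          (∫ u : ℝ, g u * Complex.exp (Complex.I * ((E l - E k : ℝ) : ℂ) * u))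
            • (P k * A * P l) := by
    have heq : (fun s : ℝ => g (-s) •
          (NormedSpace.exp ((Complex.I * s) • H) * A
            * NormedSpace.exp ((-(Complex.I * s)) • H)))
        = fun s : ℝ => ∑ k : Fin N, ∑ l : Fin N,
            (g (-s) * Complex.exp (Complex.I * s * ((E k - E l : ℝ) : ℂ)))
              • (P k * A * P l) := by
      funext s
      rw [hF s, Finset.smul_sum]
      refine Finset.sum_congr rfl fun k _ => ?_
      rw [Finset.smul_sum]
      refine Finset.sum_congr rfl fun l _ => ?_
      rw [smul_smul]
    rw [heq]
    rw [MeasureTheory.integral_finset_sum _ fun k _ =>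
      MeasureTheory.integrable_finset_sum _ fun l _ => (hint _).smul_const _]
    refine Finset.sum_congr rfl fun k _ => ?_
    rw [MeasureTheory.integral_finset_sum _ fun l _ => (hint _).smul_const _]
    refine Finset.sum_congr rfl fun l _ => ?_
    rw [integral_smul_const]
    congr 1
    have h4 : (fun s : ℝ => g (-s) * Complex.exp (Complex.I * s * ((E k - E l : ℝ) : ℂ)))
        = fun s : ℝ =>
            (fun u : ℝ => g u * Complex.exp (Complex.I * ((E l - E k : ℝ) : ℂ) * u)) (-s) := by
      funext s
      simp only
      congr 2
      push_cast
      ring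
    rw [h4]
    exact MeasureTheory.integral_neg_eq_self
      (fun u : ℝ => g u * Complex.exp (Complex.I * ((E l - E k : ℝ) : ℂ) * u)) _
  -- rewrite the right-hand side as a double sum
  have hRHS : (∑ ω ∈ Finset.image (fun p : Fin N × Fin N => E p.2 - E p.1) Finset.univ,
        (∫ u : ℝ, g u * Complex.exp (Complex.I * ω * u)) • freqComp E P A ω)
      = ∑ k : Fin N, ∑ l : Fin N,
          (∫ u : ℝ, g u * Complex.exp (Complex.I * ((E l - E k : ℝ) : ℂ) * u))
            • (P k * A * P l) := by
    simp only [freqComp, Finset.smul_sum, smul_ite, smul_zero]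
    rw [Finset.sum_comm]
    refine Finset.sum_congr rfl fun k _ => ?_
    rw [Finset.sum_comm]
    refine Finset.sum_congr rfl fun l _ => ?_
    rw [Finset.sum_ite_eq, if_pos]
    exact Finset.mem_image.mpr ⟨(k, l), Finset.mem_univ _, rfl⟩
  rw [key, ← hRHS]
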